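/- arXiv:2505.20807 — 3 statements merged into one kernel-verified Lean document; each statement's English description precedes it below -/
import Mathlib

section
/- Let H ∈ ℝ^{N×d}, {C_1,…,C_n} a partition of {1,…,N} with centroids H'_i, c_min = min_i |C_i|, μ_org the mean of rows of H, and Σ_org, Σ_syn the empirical covariances of the rows of H and of the centroids respectively. Then tr(Σ_syn) ≤ (N/(n·c_min)) · tr(Σ_org). -/
open Finset

lemma mean_min_sq {ι : Type*} [Fintype ι] (x : ι → ℝ) (c m : ℝ)
    (hm : (Fintype.card ι : ℝ) * m = ∑ i, x i) :
    ∑ i, (x i - m) ^ 2 ≤ ∑ i, (x i - c) ^ 2 := by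
  have key : ∑ i, (x i - c) ^ 2
      = ∑ i, (x i - m) ^ 2 + (Fintype.card ι : ℝ) * (m - c) ^ 2 := by
    have h1 : ∀ i, (x i - c) ^ 2 = (x i - m) ^ 2 + 2 * (m - c) * (x i - m) + (m - c) ^ 2 := by
      intro i; ring
    have h2 : ∑ i, (x i - m) = 0 := by
      rw [Finset.sum_sub_distrib, ← hm]
      simp [Finset.card_univ, mul_comm]
    calc ∑ i, (x i - c) ^ 2
        = ∑ i, ((x i - m) ^ 2 + 2 * (m - c) * (x i - m) + (m - c) ^ 2) :=
          Finset.sum_congr rfl fun i _ => h1 i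
      _ = ∑ i, (x i - m) ^ 2 + 2 * (m - c) * ∑ i, (x i - m)
            + (Fintype.card ι : ℝ) * (m - c) ^ 2 := by
          rw [Finset.sum_add_distrib, Finset.sum_add_distrib, ← Finset.mul_sum,
            Finset.sum_const, Finset.card_univ, nsmul_eq_mul]
      _ = ∑ i, (x i - m) ^ 2 + (Fintype.card ι : ℝ) * (m - c) ^ 2 := by rw [h2]; ring
  nlinarith [sq_nonneg (m - c), Nat.cast_nonneg (α := ℝ) (Fintype.card ι)]

/-- `tr(Σ_syn) ≤ (N/(n·c_min))·tr(Σ_org)` where `c_min` is the minimum cluster size. -/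
theorem syn_trace_bound
    (N n d : ℕ) (hN : 0 < N) (hn : 0 < n)
    (H : Fin N → Fin d → ℝ)
    (C : Fin n → Finset (Fin N))
    (hne : ∀ i, (C i).Nonempty)
    (hdisj : ∀ i i', i ≠ i' → Disjoint (C i) (C i'))
    (hcover : ∀ j, ∃ i, j ∈ C i)
    (H' : Fin n → Fin d → ℝ)
    (hH' : ∀ i k, H' i k = (∑ j ∈ C i, H j k) / (C i).card)
    (μorg μsyn : Fin d → ℝ)
    (hμo : ∀ k, μorg k = (∑ j, H j k) / N)
    (hμs : ∀ k, μsyn k = (∑ i, H' i k) / n)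
    (cmin : ℕ)
    (hcmin : IsLeast (Set.range fun i => (C i).card) cmin)
    (Sorg Ssyn : Matrix (Fin d) (Fin d) ℝ)
    (hSorg : ∀ a b, Sorg a b = (1 / (N : ℝ)) * ∑ j, (H j a - μorg a) * (H j b - μorg b))
    (hSsyn : ∀ a b, Ssyn a b = (1 / (n : ℝ)) * ∑ i, (H' i a - μsyn a) * (H' i b - μsyn b)) :
    Ssyn.trace ≤ ((N : ℝ) / ((n : ℝ) * (cmin : ℝ))) * Sorg.trace := by
  have hnR : (0:ℝ) < n := by exact_mod_cast hn
  have hNR : (0:ℝ) < N := by exact_mod_cast hN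
  -- cmin positivity
  obtain ⟨⟨i₀, hi₀⟩, hcle⟩ := hcmin
  have hcmin_pos : 0 < cmin := by
    rw [← hi₀]; exact Finset.card_pos.mpr (hne i₀)
  have hcR : (0:ℝ) < cmin := by exact_mod_cast hcmin_pos
  -- traces as sums
  have hTsyn : Ssyn.trace = (1 / (n:ℝ)) * ∑ k, ∑ i, (H' i k - μsyn k) ^ 2 := by
    rw [Matrix.trace, Finset.mul_sum]
    refine Finset.sum_congr rfl fun k _ => ?_
    rw [Matrix.diag_apply, hSsyn]
    congr 1; exact Finset.sum_congr rfl fun i _ => (sq _).symm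
  have hTorg : Sorg.trace = (1 / (N:ℝ)) * ∑ k, ∑ j, (H j k - μorg k) ^ 2 := by
    rw [Matrix.trace, Finset.mul_sum]
    refine Finset.sum_congr rfl fun k _ => ?_
    rw [Matrix.diag_apply, hSorg]
    congr 1; exact Finset.sum_congr rfl fun j _ => (sq _).symm
  -- step B: replace μsyn by μorg
  have stepB : ∑ k, ∑ i, (H' i k - μsyn k) ^ 2 ≤ ∑ k, ∑ i, (H' i k - μorg k) ^ 2 := by
    refine Finset.sum_le_sum fun k _ => ?_
    refine mean_min_sq (fun i => H' i k) (μorg k) (μsyn k) ?_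
    rw [hμs k]
    field_simp [Fintype.card_fin]
    rw [Fintype.card_fin]; ring
  -- step C: per i,k Jensen
  have jensen : ∀ i k, (cmin : ℝ) * (H' i k - μorg k) ^ 2
      ≤ ∑ j ∈ C i, (H j k - μorg k) ^ 2 := by
    intro i k
    have hci : (0:ℝ) < (C i).card := by exact_mod_cast Finset.card_pos.mpr (hne i)
    have hcc : (cmin : ℝ) ≤ (C i).card := by
      exact_mod_cast hcle ⟨i, rfl⟩
    have hmean : H' i k - μorg k = (∑ j ∈ C i, (H j k - μorg k)) / (C i).card := by
      rw [hH', Finset.sum_sub_distrib, Finset.sum_const, nsmul_eq_mul]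
      field_simp
    have hcs : (∑ j ∈ C i, (H j k - μorg k)) ^ 2
        ≤ (C i).card * ∑ j ∈ C i, (H j k - μorg k) ^ 2 :=
      sq_sum_le_card_mul_sum_sq
    have hT : 0 ≤ ∑ j ∈ C i, (H j k - μorg k) ^ 2 :=
      Finset.sum_nonneg fun _ _ => sq_nonneg _
    rw [hmean, div_pow, ← mul_div_assoc, div_le_iff₀ (by positivity)]
    nlinarith [hcs, hcc, hci, sq_nonneg (∑ j ∈ C i, (H j k - μorg k)), hT]
  -- step D: partition sum
  have hpart : ∀ (f : Fin N → ℝ), ∑ i, ∑ j ∈ C i, f j = ∑ j, f j := by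
    intro f
    rw [← Finset.sum_biUnion]
    · apply Finset.sum_congr _ fun _ _ => rfl
      apply Finset.eq_univ_iff_forall.mpr
      intro j
      obtain ⟨i, hi⟩ := hcover j
      exact Finset.mem_biUnion.mpr ⟨i, Finset.mem_univ i, hi⟩
    · intro a _ b _ hab
      exact hdisj a b hab
  have stepC : (cmin : ℝ) * ∑ k, ∑ i, (H' i k - μorg k) ^ 2
      ≤ ∑ k, ∑ j, (H j k - μorg k) ^ 2 := by
    rw [Finset.mul_sum]
    refine Finset.sum_le_sum fun k _ => ?_
    rw [Finset.mul_sum]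
    calc ∑ i, (cmin:ℝ) * (H' i k - μorg k) ^ 2
        ≤ ∑ i, ∑ j ∈ C i, (H j k - μorg k) ^ 2 :=
          Finset.sum_le_sum fun i _ => jensen i k
      _ = ∑ j, (H j k - μorg k) ^ 2 := hpart _
  -- combine
  rw [hTsyn, hTorg]
  have key : ∑ k, ∑ i, (H' i k - μsyn k) ^ 2
      ≤ (1 / (cmin:ℝ)) * ∑ k, ∑ j, (H j k - μorg k) ^ 2 := by
    calc ∑ k, ∑ i, (H' i k - μsyn k) ^ 2
        ≤ ∑ k, ∑ i, (H' i k - μorg k) ^ 2 := stepB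
      _ = (1 / (cmin:ℝ)) * ((cmin:ℝ) * ∑ k, ∑ i, (H' i k - μorg k) ^ 2) := by
          field_simp
      _ ≤ (1 / (cmin:ℝ)) * ∑ k, ∑ j, (H j k - μorg k) ^ 2 :=
          mul_le_mul_of_nonneg_left stepC (le_of_lt (one_div_pos.mpr hcR))
  calc (1 / (n:ℝ)) * ∑ k, ∑ i, (H' i k - μsyn k) ^ 2
      ≤ (1 / (n:ℝ)) * ((1 / (cmin:ℝ)) * ∑ k, ∑ j, (H j k - μorg k) ^ 2) := by
        apply mul_le_mul_of_nonneg_left key (by positivity)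
    _ = ((N:ℝ) / ((n:ℝ) * (cmin:ℝ))) * ((1 / (N:ℝ)) * ∑ k, ∑ j, (H j k - μorg k) ^ 2) := by
        field_simp
end

section
/- Let H ∈ ℝ^{N×d} with cluster partition {C_1,…,C_n}, centroids H'_i, c_max = max_i |C_i|, c_min = min_i |C_i|, means μ_org, μ_syn, and empirical covariances Σ_org, Σ_syn (of rows of H and of centroids, respectively). Then tr(Σ_org) + tr(Σ_syn) ≤ (1/N) Σ_{i=1}^n Σ_{j∈C_i} ‖H_j − H'_i‖₂² + (n·c_max/N)·‖μ_org − μ_syn‖₂² + (c_max/c_min + N/(n·c_min))·tr(Σ_org). -/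
open Finset

/-- combined trace bound:
`tr(Σ_org) + tr(Σ_syn) ≤ WCSS/N + (n·c_max/N)·‖μ_org − μ_syn‖²
  + (c_max/c_min + N/(n·c_min))·tr(Σ_org)`. -/
theorem combined_trace_bound
    (N n d : ℕ) (hN : 0 < N) (hn : 0 < n)
    (H : Fin N → Fin d → ℝ)
    (C : Fin n → Finset (Fin N))
    (hne : ∀ i, (C i).Nonempty)
    (hdisj : ∀ i i', i ≠ i' → Disjoint (C i) (C i'))
    (hcover : ∀ j, ∃ i, j ∈ C i)
    (H' : Fin n → Fin d → ℝ)
    (hH' : ∀ i k, H' i k = (∑ j ∈ C i, H j k) / (C i).card)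
    (μorg μsyn : Fin d → ℝ)
    (hμo : ∀ k, μorg k = (∑ j, H j k) / N)
    (hμs : ∀ k, μsyn k = (∑ i, H' i k) / n)
    (cmin cmax : ℕ)
    (hcmin : IsLeast (Set.range fun i => (C i).card) cmin)
    (hcmax : IsGreatest (Set.range fun i => (C i).card) cmax)
    (Sorg Ssyn : Matrix (Fin d) (Fin d) ℝ)
    (hSorg : ∀ a b, Sorg a b = (1 / (N : ℝ)) * ∑ j, (H j a - μorg a) * (H j b - μorg b))
    (hSsyn : ∀ a b, Ssyn a b = (1 / (n : ℝ)) * ∑ i, (H' i a - μsyn a) * (H' i b - μsyn b)) :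
    Sorg.trace + Ssyn.trace
      ≤ (1 / (N : ℝ)) * ∑ i, ∑ j ∈ C i, ∑ k, (H j k - H' i k) ^ 2
        + ((n : ℝ) * (cmax : ℝ) / N) * ∑ k, (μorg k - μsyn k) ^ 2
        + ((cmax : ℝ) / (cmin : ℝ) + (N : ℝ) / ((n : ℝ) * (cmin : ℝ))) * Sorg.trace := by
  have hNpos : (0:ℝ) < N := by exact_mod_cast hN
  have hnpos : (0:ℝ) < n := by exact_mod_cast hn
  obtain ⟨i0, hi0⟩ := hcmin.1
  have hcmin1 : 1 ≤ cmin := by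
    rw [← hi0]; exact Finset.card_pos.2 (hne i0)
  have hcminpos : (0:ℝ) < cmin := by exact_mod_cast hcmin1
  have hcminmax : (cmin : ℝ) ≤ cmax := by
    exact_mod_cast hcmax.2 ⟨i0, hi0⟩
  have hcmini : ∀ i, (cmin : ℝ) ≤ ((C i).card : ℝ) := fun i => by
    exact_mod_cast hcmin.2 ⟨i, rfl⟩
  have hcardpos : ∀ i, (0:ℝ) < ((C i).card : ℝ) := fun i =>
    lt_of_lt_of_le hcminpos (hcmini i)
  -- sum over the partition
  have hpart : ∀ g : Fin N → ℝ, ∑ i, ∑ j ∈ C i, g j = ∑ j, g j := by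
    intro g
    have hU : Finset.univ.biUnion C = Finset.univ := by
      ext j; simpa using hcover j
    rw [← hU, Finset.sum_biUnion]
    intro i _ i' _ h
    exact hdisj i i' h
  -- trace formulas
  have htrO : Sorg.trace = (1/(N:ℝ)) * ∑ j, ∑ k, (H j k - μorg k)^2 := by
    simp only [Matrix.trace, Matrix.diag, hSorg, ← sq]
    rw [← Finset.mul_sum, Finset.sum_comm]
  have htrS : Ssyn.trace = (1/(n:ℝ)) * ∑ i, ∑ k, (H' i k - μsyn k)^2 := by
    simp only [Matrix.trace, Matrix.diag, hSsyn, ← sq]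
    rw [← Finset.mul_sum, Finset.sum_comm]
  have htrOnn : 0 ≤ Sorg.trace := by
    rw [htrO]; positivity
  -- step 1: the synthetic mean minimizes the sum of squares over centroids
  have hstep1 : ∀ k, ∑ i, (H' i k - μsyn k)^2 ≤ ∑ i, (H' i k - μorg k)^2 := by
    intro k
    have hs : ∑ i, H' i k = n * μsyn k := by
      rw [hμs]; field_simp
    have hexp : ∑ i, (H' i k - μorg k)^2
        = ∑ i, (H' i k - μsyn k)^2
          + 2*(μsyn k - μorg k)*((∑ i, H' i k) - n * μsyn k)
          + n*(μsyn k - μorg k)^2 := by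
      have h1 : ∀ i, (H' i k - μorg k)^2
          = (H' i k - μsyn k)^2 + 2*(μsyn k - μorg k)*(H' i k - μsyn k)
            + (μsyn k - μorg k)^2 := by intro i; ring
      rw [Finset.sum_congr rfl (fun i _ => h1 i)]
      rw [Finset.sum_add_distrib, Finset.sum_add_distrib, ← Finset.mul_sum,
        Finset.sum_sub_distrib, Finset.sum_const, Finset.card_univ,
        Fintype.card_fin, nsmul_eq_mul, Finset.sum_const, Finset.card_univ,
        Fintype.card_fin, nsmul_eq_mul]
    rw [hexp, hs]
    nlinarith [sq_nonneg (μsyn k - μorg k)]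
  -- step 2: Jensen per cluster and coordinate
  have hstep2 : ∀ i k, (H' i k - μorg k)^2
      ≤ (1/((C i).card : ℝ)) * ∑ j ∈ C i, (H j k - μorg k)^2 := by
    intro i k
    have hc := hcardpos i
    have hrw : H' i k - μorg k = (∑ j ∈ C i, (H j k - μorg k)) / (C i).card := by
      rw [hH', Finset.sum_sub_distrib, Finset.sum_const, nsmul_eq_mul, sub_div]
      field_simp
    have hcs : (∑ j ∈ C i, (H j k - μorg k))^2
        ≤ ((C i).card : ℝ) * ∑ j ∈ C i, (H j k - μorg k)^2 := by
      exact_mod_cast sq_sum_le_card_mul_sum_sq (s := C i)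
        (f := fun j => H j k - μorg k)
    rw [hrw, div_pow]
    rw [div_le_iff₀ (by positivity)]
    calc (∑ j ∈ C i, (H j k - μorg k))^2
        ≤ ((C i).card : ℝ) * ∑ j ∈ C i, (H j k - μorg k)^2 := hcs
      _ = (1/((C i).card : ℝ) * ∑ j ∈ C i, (H j k - μorg k)^2) * ((C i).card:ℝ)^2 := by
          field_simp
  -- combine: trace of Ssyn bounded by (N/(n·cmin))·trace of Sorg
  have hstep3 : Ssyn.trace ≤ ((N:ℝ)/((n:ℝ)*(cmin:ℝ))) * Sorg.trace := by
    rw [htrS, htrO]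
    have h1 : ∑ i, ∑ k, (H' i k - μsyn k)^2 ≤ ∑ i, ∑ k, (H' i k - μorg k)^2 := by
      calc ∑ i, ∑ k, (H' i k - μsyn k)^2
          = ∑ k, ∑ i, (H' i k - μsyn k)^2 := Finset.sum_comm
        _ ≤ ∑ k, ∑ i, (H' i k - μorg k)^2 := Finset.sum_le_sum fun k _ => hstep1 k
        _ = ∑ i, ∑ k, (H' i k - μorg k)^2 := Finset.sum_comm
    have h2 : ∑ i, ∑ k, (H' i k - μorg k)^2
        ≤ ∑ i, (1/((C i).card : ℝ)) * ∑ j ∈ C i, ∑ k, (H j k - μorg k)^2 := by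
      refine Finset.sum_le_sum fun i _ => ?_
      calc ∑ k, (H' i k - μorg k)^2
          ≤ ∑ k, (1/((C i).card : ℝ)) * ∑ j ∈ C i, (H j k - μorg k)^2 :=
            Finset.sum_le_sum fun k _ => hstep2 i k
        _ = (1/((C i).card : ℝ)) * ∑ j ∈ C i, ∑ k, (H j k - μorg k)^2 := by
            rw [← Finset.mul_sum, Finset.sum_comm]
    have h3 : ∑ i, (1/((C i).card : ℝ)) * ∑ j ∈ C i, ∑ k, (H j k - μorg k)^2
        ≤ (1/(cmin:ℝ)) * ∑ j, ∑ k, (H j k - μorg k)^2 := by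
      rw [← hpart (fun j => ∑ k, (H j k - μorg k)^2), Finset.mul_sum]
      refine Finset.sum_le_sum fun i _ => ?_
      have hinner : (0:ℝ) ≤ ∑ j ∈ C i, ∑ k, (H j k - μorg k)^2 := by positivity
      apply mul_le_mul_of_nonneg_right _ hinner
      rw [div_le_div_iff₀ (hcardpos i) hcminpos]
      nlinarith [hcmini i]
    calc (1/(n:ℝ)) * ∑ i, ∑ k, (H' i k - μsyn k)^2
        ≤ (1/(n:ℝ)) * ((1/(cmin:ℝ)) * ∑ j, ∑ k, (H j k - μorg k)^2) := by
          apply mul_le_mul_of_nonneg_left _ (by positivity)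
          exact le_trans h1 (le_trans h2 h3)
      _ = ((N:ℝ)/((n:ℝ)*(cmin:ℝ))) * ((1/(N:ℝ)) * ∑ j, ∑ k, (H j k - μorg k)^2) := by
          field_simp
  -- assemble
  have hW : (0:ℝ) ≤ (1 / (N : ℝ)) * ∑ i, ∑ j ∈ C i, ∑ k, (H j k - H' i k) ^ 2 := by
    positivity
  have hM : (0:ℝ) ≤ ((n : ℝ) * (cmax : ℝ) / N) * ∑ k, (μorg k - μsyn k) ^ 2 := by
    positivity
  have hratio : (1:ℝ) ≤ (cmax:ℝ)/(cmin:ℝ) := (one_le_div hcminpos).2 hcminmax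
  nlinarith [mul_le_mul_of_nonneg_right hratio htrOnn]
end

section
/- Let G̃ be a weighted graph on nodes of G where each edge (v_i,v_j) has weight cos(H_i,H_j) ∈ (0,1], and let d̃(v_i) = Σ_{ℓ∈N(v_i)} cos(H_i,H_ℓ) > 0 be the weighted degrees. Then for each edge, the effective resistance r(v_i,v_j) of the weighted graph satisfies (1/2)(1/d̃(v_i) + 1/d̃(v_j)) ≤ r(v_i,v_j) ≤ (1/(1−λ₂))·(1/d̃(v_i) + 1/d̃(v_j)), where λ₂ < 1 is the second largest eigenvalue of the normalized adjacency matrix of G̃. -/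
open Finset Matrix

set_option maxHeartbeats 1000000 in
/-- effective-resistance bounds on a weighted graph with weights
`cos(H_i,H_j) ∈ (0,1]`: for each edge,
`(1/2)(1/d̃_i + 1/d̃_j) ≤ r(i,j) ≤ (1/(1−λ₂))·(1/d̃_i + 1/d̃_j)`, where `r` is
defined via the Moore–Penrose pseudoinverse of the weighted Laplacian and `λ₂ < 1`
bounds the non-principal spectrum of the normalized adjacency matrix. -/
theorem effective_resistance_bounds
    (NV : ℕ) (G : SimpleGraph (Fin NV)) (hconn : G.Connected)
    (w : Fin NV → Fin NV → ℝ)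
    (hwsymm : ∀ i j, w i j = w j i)
    (hw_edge : ∀ i j, G.Adj i j → 0 < w i j ∧ w i j ≤ 1)
    (hw_nonedge : ∀ i j, ¬G.Adj i j → w i j = 0)
    (dt : Fin NV → ℝ) (hdt : ∀ i, dt i = ∑ j, w i j)
    (hdtpos : ∀ i, 0 < dt i)
    (L : Matrix (Fin NV) (Fin NV) ℝ)
    (hL : ∀ i j, L i j = (if i = j then dt i else 0) - w i j)
    (Lp : Matrix (Fin NV) (Fin NV) ℝ)
    (hLp1 : L * Lp * L = L) (hLp2 : Lp * L * Lp = Lp)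
    (hLp3 : (L * Lp)ᵀ = L * Lp) (hLp4 : (Lp * L)ᵀ = Lp * L)
    (r : Fin NV → Fin NV → ℝ)
    (hr : ∀ i j, r i j =
      (Pi.single i (1:ℝ) - Pi.single j 1) ⬝ᵥ Lp.mulVec (Pi.single i 1 - Pi.single j 1))
    (An : Matrix (Fin NV) (Fin NV) ℝ)
    (hAn : ∀ i j, An i j = w i j / (Real.sqrt (dt i) * Real.sqrt (dt j)))
    (lam2 : ℝ) (hlam2lt : lam2 < 1)
    (hlam2 : ∀ v : Fin NV → ℝ,
      (∑ i, Real.sqrt (dt i) * v i = 0) → v ⬝ᵥ An.mulVec v ≤ lam2 * ∑ i, (v i) ^ 2) :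
    ∀ i j, G.Adj i j →
      (1 / 2) * (1 / dt i + 1 / dt j) ≤ r i j
      ∧ r i j ≤ (1 / (1 - lam2)) * (1 / dt i + 1 / dt j) := by
  -- basic facts about w and L
  have hwnn : ∀ a b, 0 ≤ w a b := by
    intro a b
    by_cases h : G.Adj a b
    · exact (hw_edge a b h).1.le
    · rw [hw_nonedge a b h]
  have hwdiag : ∀ a, w a a = 0 := fun a => hw_nonedge a a (G.irrefl)
  have hLsym : Lᵀ = L := by
    ext a b
    simp only [transpose_apply, hL, hwsymm b a]
    by_cases h : a = b
    · subst h; rfl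
    · rw [if_neg h, if_neg (Ne.symm h)]
  have hrow : ∀ a, ∑ b, L a b = 0 := by
    intro a
    simp only [hL]
    rw [Finset.sum_sub_distrib, Finset.sum_ite_eq, ← hdt]
    simp
  -- the quadratic form of L
  have hquad : ∀ v : Fin NV → ℝ,
      v ⬝ᵥ L *ᵥ v = (∑ a, dt a * v a ^ 2) - ∑ a, ∑ b, w a b * (v a * v b) := by
    intro v
    simp only [dotProduct, mulVec]
    have h1 : ∀ a : Fin NV, v a * ∑ b, L a b * v b
        = (dt a * v a ^ 2) - ∑ b, w a b * (v a * v b) := by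
      intro a
      rw [Finset.mul_sum]
      have h2 : ∀ b : Fin NV, v a * (L a b * v b)
          = (if a = b then dt a * v a ^ 2 else 0) - w a b * (v a * v b) := by
        intro b
        rw [hL]
        split_ifs with h
        · subst h; ring
        · ring
      simp only [h2]
      rw [Finset.sum_sub_distrib, Finset.sum_ite_eq]
      simp
    simp only [h1]
    rw [Finset.sum_sub_distrib]
  -- the quadratic form as a sum of squares
  have hform : ∀ v : Fin NV → ℝ,
      ∑ a, ∑ b, w a b * (v a - v b) ^ 2 = 2 * (v ⬝ᵥ L *ᵥ v) := by
    intro v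
    rw [hquad v]
    have hA : (∑ a, ∑ b, w a b * v a ^ 2) = ∑ a, dt a * v a ^ 2 := by
      refine Finset.sum_congr rfl fun a _ => ?_
      rw [← Finset.sum_mul, ← hdt]
    have hB : (∑ a : Fin NV, ∑ b, w a b * v b ^ 2) = ∑ a, dt a * v a ^ 2 := by
      rw [Finset.sum_comm]
      refine Finset.sum_congr rfl fun b _ => ?_
      have : ∀ a : Fin NV, w a b * v b ^ 2 = w b a * v b ^ 2 := fun a => by rw [hwsymm]
      simp only [this]
      rw [← Finset.sum_mul, ← hdt]
    have e1 : ∑ a, ∑ b, w a b * (v a - v b) ^ 2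
        = (∑ a, ∑ b, w a b * v a ^ 2) + (∑ a : Fin NV, ∑ b, w a b * v b ^ 2)
          - 2 * ∑ a, ∑ b, w a b * (v a * v b) := by
      simp only [Finset.mul_sum, ← Finset.sum_add_distrib, ← Finset.sum_sub_distrib]
      refine Finset.sum_congr rfl fun a _ => Finset.sum_congr rfl fun b _ => ?_
      ring
    rw [e1, hA, hB]; ring
  -- positive semidefiniteness
  have hpsd : ∀ v : Fin NV → ℝ, 0 ≤ v ⬝ᵥ L *ᵥ v := by
    intro v
    have h1 : 0 ≤ ∑ a, ∑ b, w a b * (v a - v b) ^ 2 :=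
      Finset.sum_nonneg fun a _ => Finset.sum_nonneg fun b _ =>
        mul_nonneg (hwnn a b) (sq_nonneg _)
    rw [hform v] at h1
    linarith
  -- kernel of L consists of constants
  have hker : ∀ v : Fin NV → ℝ, L *ᵥ v = 0 → ∀ a b, v a = v b := by
    intro v hv
    have hq : v ⬝ᵥ L *ᵥ v = 0 := by rw [hv, dotProduct_zero]
    have h2 : ∑ a, ∑ b, w a b * (v a - v b) ^ 2 = 0 := by rw [hform v, hq, mul_zero]
    have hzero : ∀ a b, G.Adj a b → v a = v b := by
      intro a b hab
      have h3 : ∀ p ∈ (univ : Finset (Fin NV)), (0:ℝ) ≤ ∑ b, w p b * (v p - v b) ^ 2 :=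
        fun p _ => Finset.sum_nonneg fun b _ => mul_nonneg (hwnn p b) (sq_nonneg _)
      have h4 := (Finset.sum_eq_zero_iff_of_nonneg h3).mp h2 a (mem_univ a)
      have h5 : ∀ q ∈ (univ : Finset (Fin NV)), (0:ℝ) ≤ w a q * (v a - v q) ^ 2 :=
        fun q _ => mul_nonneg (hwnn a q) (sq_nonneg _)
      have h6 := (Finset.sum_eq_zero_iff_of_nonneg h5).mp h4 b (mem_univ b)
      have hwpos := (hw_edge a b hab).1
      have h7 : (v a - v b) ^ 2 = 0 := by
        rcases mul_eq_zero.mp h6 with h | h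
        · exact absurd h (ne_of_gt hwpos)
        · exact h
      have := pow_eq_zero_iff (n := 2) (by norm_num) |>.mp h7
      linarith [this]
    intro a b
    obtain ⟨p⟩ := hconn.preconnected a b
    induction p with
    | nil => rfl
    | cons h q ih => exact (hzero _ _ h).trans ih
  -- Cauchy–Schwarz for the PSD form L
  have hCS : ∀ a b : Fin NV → ℝ, (a ⬝ᵥ L *ᵥ b) ^ 2 ≤ (a ⬝ᵥ L *ᵥ a) * (b ⬝ᵥ L *ᵥ b) := by
    intro a b
    have hsym : b ⬝ᵥ L *ᵥ a = a ⬝ᵥ L *ᵥ b := by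
      rw [dotProduct_mulVec]
      conv_lhs => rw [← hLsym]
      rw [vecMul_transpose, dotProduct_comm]
    have hs : ∀ t : ℝ, 0 ≤ (b ⬝ᵥ L *ᵥ b) * (t * t) + (2 * (a ⬝ᵥ L *ᵥ b)) * t + (a ⬝ᵥ L *ᵥ a) := by
      intro t
      have h0 := hpsd (a + t • b)
      have hexp : (a + t • b) ⬝ᵥ L *ᵥ (a + t • b)
          = (b ⬝ᵥ L *ᵥ b) * (t * t) + (2 * (a ⬝ᵥ L *ᵥ b)) * t + (a ⬝ᵥ L *ᵥ a) := by
        rw [mulVec_add, mulVec_smul, add_dotProduct, smul_dotProduct, dotProduct_add,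
          dotProduct_add, dotProduct_smul, dotProduct_smul, hsym]
        simp only [smul_eq_mul]
        ring
      linarith [hexp ▸ h0]
    have hd := discrim_le_zero hs
    rw [discrim] at hd
    nlinarith [hd]
  -- L annihilates constants
  have hconstv : ∀ c : ℝ, L *ᵥ (fun _ : Fin NV => c) = 0 := by
    intro c
    funext a
    simp only [mulVec, dotProduct, Pi.zero_apply]
    rw [← Finset.sum_mul, hrow, zero_mul]
  -- key matrix identities
  have hPP : (L * Lp) * (L * Lp) = L * Lp := by
    rw [← Matrix.mul_assoc, hLp1]
  have hLpT : L * Lpᵀ * L = L := by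
    have h := congrArg Matrix.transpose hLp1
    rwa [Matrix.transpose_mul, Matrix.transpose_mul, hLsym, ← Matrix.mul_assoc] at h
  have hLLLp : L * (L * Lp) = L := by
    have h1 : Lpᵀ * L = L * Lp := by
      have := hLp3
      rwa [Matrix.transpose_mul, hLsym] at this
    rw [← h1, ← Matrix.mul_assoc]
    exact hLpT
  -- now fix the edge
  intro i j hij
  have hne : i ≠ j := G.ne_of_adj hij
  set x : Fin NV → ℝ := Pi.single i 1 - Pi.single j 1 with hx
  clear_value x
  have hxval : ∀ a, x a = (if a = i then (1:ℝ) else 0) - (if a = j then 1 else 0) := by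
    intro a
    simp [hx, Pi.single_apply]
  have hxdot : ∀ v : Fin NV → ℝ, x ⬝ᵥ v = v i - v j := by
    intro v
    simp only [dotProduct, hxval, sub_mul, ite_mul, one_mul, zero_mul]
    rw [Finset.sum_sub_distrib, Finset.sum_ite_eq', Finset.sum_ite_eq']
    simp
  have hxsum : ∑ a, x a = 0 := by
    simp only [hxval]
    rw [Finset.sum_sub_distrib, Finset.sum_ite_eq', Finset.sum_ite_eq']
    simp
  -- u := Lp x satisfies L u = x
  set u : Fin NV → ℝ := Lp *ᵥ x with hu
  clear_value u
  have hP1 : L *ᵥ u = (L * Lp) *ᵥ x := by rw [hu, mulVec_mulVec]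
  set q : Fin NV → ℝ := x - L *ᵥ u with hqdef
  clear_value q
  have hLq : L *ᵥ q = 0 := by
    rw [hqdef, mulVec_sub, hP1, mulVec_mulVec, hLLLp, sub_self]
  have hqc : ∀ a b, q a = q b := hker q hLq
  have hPq : (L * Lp) *ᵥ q = 0 := by
    rw [hqdef, mulVec_sub, hP1, mulVec_mulVec, hPP, sub_self]
  have hqx : q ⬝ᵥ x = 0 := by
    have h1 : q ⬝ᵥ x = ∑ a, q i * x a := by
      simp only [dotProduct]
      exact Finset.sum_congr rfl fun a _ => by rw [hqc a i]
    rw [h1, ← Finset.mul_sum, hxsum, mul_zero]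
  have hqLu : q ⬝ᵥ (L *ᵥ u) = 0 := by
    rw [hP1, dotProduct_mulVec]
    have h2 : q ᵥ* (L * Lp) = 0 := by
      rw [← hLp3, vecMul_transpose, hPq]
    rw [h2, zero_dotProduct]
  have hqq : q ⬝ᵥ q = 0 := by
    have := dotProduct_sub q x (L *ᵥ u)
    rw [← hqdef] at this
    rw [this, hqx, hqLu, sub_zero]
  have hq0 : q = 0 := by
    funext a
    have h1 : ∀ p ∈ (univ : Finset (Fin NV)), (0:ℝ) ≤ q p * q p :=
      fun p _ => mul_self_nonneg _
    have h2 := (Finset.sum_eq_zero_iff_of_nonneg h1).mp hqq a (mem_univ a)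
    have := mul_self_eq_zero.mp h2
    simpa using this
  have hLux : L *ᵥ u = x := by
    have := sub_eq_zero.mp (hqdef ▸ hq0)
    exact this.symm
  -- r i j = x ⬝ᵥ u
  have hrij : r i j = x ⬝ᵥ u := by
    rw [hr i j, ← hx, ← hu]
  have hruLu : r i j = u ⬝ᵥ L *ᵥ u := by
    rw [hrij, hLux, dotProduct_comm]
  -- the test vector z for the lower bound
  set s : ℝ := 1 / dt i + 1 / dt j with hs
  clear_value s
  have hdipos := hdtpos i
  have hdjpos := hdtpos j
  have hspos : 0 < s := by
    rw [hs]; positivity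
  set z : Fin NV → ℝ :=
    fun a => (if a = i then 1 / dt i else 0) - (if a = j then 1 / dt j else 0) with hz
  clear_value z
  have hzdot : ∀ v : Fin NV → ℝ, z ⬝ᵥ v = (1 / dt i) * v i - (1 / dt j) * v j := by
    intro v
    simp only [dotProduct, hz, sub_mul, ite_mul, zero_mul]
    rw [Finset.sum_sub_distrib, Finset.sum_ite_eq', Finset.sum_ite_eq']
    simp
  have hzx : z ⬝ᵥ x = s := by
    rw [hzdot x, hxval i, hxval j, if_pos rfl, if_pos rfl, if_neg hne, if_neg (Ne.symm hne)]
    rw [hs]; ring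
  -- compute z L z
  have hLii : L i i = dt i := by rw [hL, if_pos rfl, hwdiag, sub_zero]
  have hLjj : L j j = dt j := by rw [hL, if_pos rfl, hwdiag, sub_zero]
  have hLij : L i j = - w i j := by rw [hL, if_neg hne, zero_sub]
  have hLji : L j i = - w i j := by rw [hL, if_neg (Ne.symm hne), zero_sub, hwsymm j i]
  have hmvz : ∀ a, (L *ᵥ z) a = (1 / dt i) * L a i - (1 / dt j) * L a j := by
    intro a
    show (fun b => L a b) ⬝ᵥ z = _
    rw [dotProduct_comm, hzdot]
  have hzLz : z ⬝ᵥ L *ᵥ z = s + 2 * w i j / (dt i * dt j) := by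
    rw [hzdot (L *ᵥ z), hmvz i, hmvz j, hLii, hLjj, hLij, hLji, hs]
    field_simp
    ring
  -- dt i ≥ w i j and dt j ≥ w i j
  have hdi_ge : w i j ≤ dt i := by
    rw [hdt i]
    exact Finset.single_le_sum (f := fun b => w i b) (fun b _ => hwnn i b) (mem_univ j)
  have hdj_ge : w i j ≤ dt j := by
    rw [hdt j, hwsymm i j]
    exact Finset.single_le_sum (f := fun b => w j b) (fun b _ => hwnn j b) (mem_univ i)
  have hzLz_le : z ⬝ᵥ L *ᵥ z ≤ 2 * s := by
    rw [hzLz]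
    have h3 : 2 * w i j / (dt i * dt j) ≤ s := by
      rw [hs, div_le_iff₀ (by positivity)]
      have h1 : 2 * w i j ≤ dt i + dt j := by linarith
      have h2 : (1 / dt i + 1 / dt j) * (dt i * dt j) = dt i + dt j := by
        field_simp; ring
      linarith [h1, h2]
    linarith
  -- lower bound
  have hrnn : 0 ≤ r i j := by rw [hruLu]; exact hpsd u
  have hlow : (1 / 2) * s ≤ r i j := by
    have hcs := hCS z u
    have hzLu : z ⬝ᵥ L *ᵥ u = s := by rw [hLux, hzx]
    rw [hzLu, ← hruLu, sq] at hcs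
    have h2 : s * s ≤ s * (2 * r i j) := by
      have h1 := mul_le_mul_of_nonneg_right hzLz_le hrnn
      linarith
    have h4 : s ≤ 2 * r i j := (mul_le_mul_iff_right₀ hspos).mp h2
    linarith
  have h0s : (0:ℝ) < 1 / 2 * s := by linarith
  have hrpos : 0 < r i j := lt_of_lt_of_le h0s hlow
  -- upper bound
  have hsqrtpos : ∀ a, (0:ℝ) < Real.sqrt (dt a) := fun a => Real.sqrt_pos.mpr (hdtpos a)
  have hsq : ∀ a, Real.sqrt (dt a) * Real.sqrt (dt a) = dt a :=
    fun a => Real.mul_self_sqrt (hdtpos a).le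
  set S : ℝ := ∑ a, dt a with hS
  clear_value S
  have hSpos : 0 < S := by
    rw [hS]; exact Finset.sum_pos (fun a _ => hdtpos a) ⟨i, mem_univ i⟩
  set c : ℝ := -(∑ a, dt a * u a) / S with hc
  clear_value c
  set u' : Fin NV → ℝ := fun a => u a + c with hu'
  have hu'eq : u' = u + (fun _ => c) := rfl
  clear_value u'
  have hLu' : L *ᵥ u' = x := by
    rw [hu'eq, mulVec_add, hLux, hconstv, add_zero]
  have hxu' : x ⬝ᵥ u' = r i j := by
    rw [hu'eq, dotProduct_add, hrij]
    have : x ⬝ᵥ (fun _ : Fin NV => c) = 0 := by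
      simp only [dotProduct]
      rw [← Finset.sum_mul, hxsum, zero_mul]
    rw [this, add_zero]
  have hrquad' : r i j = u' ⬝ᵥ L *ᵥ u' := by
    rw [← hxu', hLu', dotProduct_comm]
  set y : Fin NV → ℝ := fun a => Real.sqrt (dt a) * u' a with hy
  clear_value y
  have hsum0 : ∑ a, Real.sqrt (dt a) * y a = 0 := by
    have h1 : ∀ a : Fin NV, Real.sqrt (dt a) * y a = dt a * u a + dt a * c := by
      intro a
      rw [hy]
      show Real.sqrt (dt a) * (Real.sqrt (dt a) * u' a) = _
      rw [← mul_assoc, hsq a, hu']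
      ring
    simp only [h1]
    rw [Finset.sum_add_distrib, ← Finset.sum_mul, ← hS, hc]
    field_simp [hSpos.ne']
    ring
  have hy2 : ∑ a, y a ^ 2 = ∑ a, dt a * u' a ^ 2 := by
    refine Finset.sum_congr rfl fun a _ => ?_
    rw [hy]
    show (Real.sqrt (dt a) * u' a) ^ 2 = _
    rw [mul_pow, sq, hsq a]
  have hyAy : y ⬝ᵥ An *ᵥ y = ∑ a, ∑ b, w a b * (u' a * u' b) := by
    simp only [dotProduct, mulVec]
    refine Finset.sum_congr rfl fun a _ => ?_
    rw [Finset.mul_sum]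
    refine Finset.sum_congr rfl fun b _ => ?_
    rw [hAn, hy]
    show Real.sqrt (dt a) * u' a * (w a b / (Real.sqrt (dt a) * Real.sqrt (dt b)) *
      (Real.sqrt (dt b) * u' b)) = _
    field_simp [(hsqrtpos a).ne', (hsqrtpos b).ne']
  have hspec := hlam2 y hsum0
  rw [hyAy, hy2] at hspec
  have hry : (1 - lam2) * (∑ a, dt a * u' a ^ 2) ≤ r i j := by
    rw [hrquad', hquad u']
    linarith [hspec]
  -- Cauchy–Schwarz step
  have hxu'sum : r i j = ∑ a, (x a / Real.sqrt (dt a)) * y a := by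
    rw [← hxu']
    simp only [dotProduct]
    refine Finset.sum_congr rfl fun a _ => ?_
    rw [hy]
    show x a * u' a = x a / Real.sqrt (dt a) * (Real.sqrt (dt a) * u' a)
    field_simp [(hsqrtpos a).ne']
  have hxnorm : ∑ a, (x a / Real.sqrt (dt a)) ^ 2 = s := by
    have h1 : ∀ a : Fin NV, (x a / Real.sqrt (dt a)) ^ 2
        = (if a = i then 1 / dt i else 0) + (if a = j then 1 / dt j else 0) := by
      intro a
      rw [hxval a]
      by_cases hai : a = i
      · subst hai
        rw [if_pos rfl, if_neg hne, if_pos rfl, if_neg hne]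
        rw [div_pow, Real.sq_sqrt (hdtpos a).le]
        norm_num
      · rw [if_neg hai, if_neg hai]
        by_cases haj : a = j
        · subst haj
          rw [if_pos rfl, if_pos rfl]
          rw [div_pow, Real.sq_sqrt (hdtpos a).le]
          norm_num
        · rw [if_neg haj, if_neg haj]
          norm_num
    simp only [h1]
    rw [Finset.sum_add_distrib, Finset.sum_ite_eq', Finset.sum_ite_eq']
    simp [hs]
  have hcs2 : (r i j) ^ 2 ≤ s * ∑ a, dt a * u' a ^ 2 := by
    have := Finset.sum_mul_sq_le_sq_mul_sq univ (fun a => x a / Real.sqrt (dt a)) y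
    rw [← hxu'sum, hxnorm, hy2] at this
    exact this
  have h1ml : 0 < 1 - lam2 := by linarith
  have hupper : r i j ≤ (1 / (1 - lam2)) * s := by
    have hsum_nn : 0 ≤ ∑ a, dt a * u' a ^ 2 :=
      Finset.sum_nonneg fun a _ => mul_nonneg (hdtpos a).le (sq_nonneg _)
    have key : r i j * (1 - lam2) ≤ s := by
      nlinarith [hcs2, mul_le_mul_of_nonneg_left hry hspos.le, hrpos, h1ml, hsum_nn]
    have heq : (1 / (1 - lam2)) * s = s / (1 - lam2) := by ring
    rw [heq, le_div_iff₀ h1ml]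
    exact key
  exact ⟨hlow, hupper⟩
end
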